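/- With u₀ and g₀ the Taubes background functions for n vortices with parameter λ > 4n, for every real u ≤ 0 and every point x (away from the vortex centers), u·(e^{u + u₀(x)} + g₀(x) - 1) ≥ ((λ - 4n)/λ)·|u|²/(1 + |u|). -/

import Mathlib

open MeasureTheory

theorem taubes_estimate_nonpos (n : ℕ) (hn : 1 ≤ n) (lam : ℝ)
    (hlam : 4 * n < lam)
    (p : Fin n → EuclideanSpace ℝ (Fin 2))
    (x : EuclideanSpace ℝ (Fin 2)) (hx : ∀ a, x ≠ p a)
    (u : ℝ) (hu : u ≤ 0) :
    u * (Real.exp (u + (-(∑ a, Real.log (1 + lam / ‖x - p a‖ ^ 2))))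
          + (∑ a, 4 * lam / (‖x - p a‖ ^ 2 + lam) ^ 2) - 1)
      ≥ ((lam - 4 * n) / lam) * (u ^ 2 / (1 + |u|)) := by
  have hn' : (1:ℝ) ≤ (n:ℝ) := by exact_mod_cast hn
  have hlam0 : (0:ℝ) < lam := lt_of_le_of_lt (by positivity) hlam
  have hr : ∀ a, 0 < ‖x - p a‖ ^ 2 := by
    intro a
    have h : x - p a ≠ 0 := sub_ne_zero.mpr (hx a)
    have h2 : 0 < ‖x - p a‖ := norm_pos_iff.mpr h
    positivity
  set y : Fin n → ℝ := fun a => lam / (‖x - p a‖ ^ 2 + lam) with hydef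
  have hy0 : ∀ a, 0 < y a := fun a => div_pos hlam0 (by positivity)
  have hy1 : ∀ a, y a < 1 := fun a => by
    rw [hydef]
    rw [div_lt_one (by positivity)]
    linarith [hr a]
  set P : ℝ := ∏ a, (1 - y a) with hPdef
  have hP0 : 0 < P := Finset.prod_pos (fun a _ => by linarith [hy1 a])
  have hP1 : P ≤ 1 :=
    Finset.prod_le_one (fun a _ => by linarith [hy1 a]) (fun a _ => by linarith [hy0 a])
  have hexp : Real.exp (-(∑ a, Real.log (1 + lam / ‖x - p a‖ ^ 2))) = P := by
    rw [← Finset.sum_neg_distrib, Real.exp_sum]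
    apply Finset.prod_congr rfl
    intro a _
    have h1 : (0:ℝ) < 1 + lam / ‖x - p a‖ ^ 2 := by positivity
    rw [Real.exp_neg, Real.exp_log h1]
    have h2 : ‖x - p a‖ ^ 2 ≠ 0 := ne_of_gt (hr a)
    have h3 : ‖x - p a‖ ^ 2 + lam ≠ 0 := by positivity
    rw [hydef]
    field_simp
    rw [add_sub_cancel_right, add_mul, div_mul_cancel₀ _ h2]
    ring
  -- max element
  obtain ⟨a0, -, hmax⟩ :=
    Finset.exists_max_image (Finset.univ : Finset (Fin n)) y ⟨⟨0, hn⟩, Finset.mem_univ _⟩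
  have hPle : P ≤ 1 - y a0 := by
    calc P = (1 - y a0) * ∏ a ∈ Finset.univ.erase a0, (1 - y a) :=
          (Finset.mul_prod_erase _ _ (Finset.mem_univ a0)).symm
      _ ≤ (1 - y a0) * 1 := by
          apply mul_le_mul_of_nonneg_left
          · exact Finset.prod_le_one (fun a _ => by linarith [hy1 a])
              (fun a _ => by linarith [hy0 a])
          · linarith [hy1 a0]
      _ = 1 - y a0 := mul_one _
  have hG : (∑ a, 4 * lam / (‖x - p a‖ ^ 2 + lam) ^ 2) ≤ (4 * n / lam) * (1 - P) := by
    have hya0P : y a0 ≤ 1 - P := by linarith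
    calc (∑ a, 4 * lam / (‖x - p a‖ ^ 2 + lam) ^ 2)
        = ∑ a, (4 / lam) * (y a) ^ 2 := Finset.sum_congr rfl (fun a _ => by
          have h3 : ‖x - p a‖ ^ 2 + lam ≠ 0 := by positivity
          rw [hydef]
          field_simp)
      _ ≤ ∑ _a : Fin n, (4 / lam) * y a0 := Finset.sum_le_sum (fun a _ => by
          have h := hmax a (Finset.mem_univ a)
          have h4 : (0:ℝ) < 4 / lam := by positivity
          have h5 : y a ^ 2 ≤ y a0 := by nlinarith [hy0 a, hy1 a]
          exact mul_le_mul_of_nonneg_left h5 h4.le)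
      _ = (n:ℝ) * ((4 / lam) * y a0) := by
          rw [Finset.sum_const, Finset.card_univ, Fintype.card_fin, nsmul_eq_mul]
      _ ≤ (4 * n / lam) * (1 - P) := by
          have h5 : (0:ℝ) < 4 * n / lam := by positivity
          have h6 : (n:ℝ) * ((4 / lam) * y a0) = (4 * n / lam) * y a0 := by ring
          rw [h6]
          exact mul_le_mul_of_nonneg_left hya0P h5.le
  rw [Real.exp_add, hexp, abs_of_nonpos hu]
  set t := Real.exp u with htdef
  have ht0 : 0 < t := Real.exp_pos u
  have ht1 : t ≤ 1 := by
    rw [htdef]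
    calc Real.exp u ≤ Real.exp 0 := Real.exp_le_exp.mpr hu
      _ = 1 := Real.exp_zero
  have hA : t * (1 - u) ≤ 1 := by
    have h1 : t * Real.exp (-u) = 1 := by
      rw [← Real.exp_add]; simp
    have h2 := mul_le_mul_of_nonneg_left (Real.add_one_le_exp (-u)) ht0.le
    nlinarith
  set c : ℝ := 4 * n / lam with hcdef
  have hc0 : 0 < c := by positivity
  have hc1 : c < 1 := by
    rw [hcdef, div_lt_one hlam0]; linarith
  have hcc : (lam - 4 * n) / lam = 1 - c := by
    rw [hcdef]; field_simp
  rw [hcc]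
  have h1u : (0:ℝ) < 1 + -u := by linarith
  -- step 1
  have step1 : u * (t * P + c * (1 - P) - 1) ≤
      u * (t * P + (∑ a, 4 * lam / (‖x - p a‖ ^ 2 + lam) ^ 2) - 1) := by
    apply mul_le_mul_of_nonpos_left _ hu
    linarith
  -- step 2
  have F1 : (1 - c) * (1 - t) ≤ 1 - c * (1 - P) - t * P := by
    nlinarith [mul_nonneg ht0.le (mul_nonneg (by linarith : (0:ℝ) ≤ 1 - P)
      (by linarith : (0:ℝ) ≤ 1 - c)),
      mul_nonneg (mul_nonneg hP0.le hc0.le) (by linarith : (0:ℝ) ≤ 1 - t)]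
  have F2 : u ^ 2 ≤ (1 - t) * (-u) * (1 - u) := by
    nlinarith [mul_le_mul_of_nonneg_left hA (neg_nonneg.2 hu)]
  have step2 : (1 - c) * (u ^ 2 / (1 + -u)) ≤ u * (t * P + c * (1 - P) - 1) := by
    rw [mul_div_assoc'] at *
    rw [div_le_iff₀ h1u]
    nlinarith [mul_le_mul_of_nonneg_right F1 (mul_nonneg (neg_nonneg.2 hu) (by linarith : (0:ℝ) ≤ 1 - u)),
      mul_le_mul_of_nonneg_left F2 (by linarith : (0:ℝ) ≤ 1 - c)]
  linarith
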